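/- Let n ≥ 2 and let P ∈ ℝ^{n×n} be a permutation matrix (the matrix of any permutation of {1,…,n}). Then I − P is positive semi-definite in the sense that xᵀ(I − P)x ≥ 0 for all x ∈ ℝⁿ, and moreover for every real s ≥ cot(π/n) and every z ∈ ℂⁿ one has z† ( s(2I − P − Pᵀ) + i(Pᵀ − P) ) z ≥ 0; i.e. the asymmetry index of I − P is at most cot(π/n). -/

import Mathlib

open Complex Finset


lemma cot_antitone {a b : ℝ} (ha : 0 < a) (hab : a ≤ b) (hb : b ≤ Real.pi/2) :
    Real.cot b ≤ Real.cot a := by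
  rw [Real.cot_eq_cos_div_sin, Real.cot_eq_cos_div_sin]
  have hpi := Real.pi_pos
  have hbpi : b < Real.pi := lt_of_le_of_lt hb (by linarith)
  have hsa : 0 < Real.sin a := Real.sin_pos_of_pos_of_lt_pi ha (lt_of_le_of_lt hab hbpi)
  have hsab : Real.sin a ≤ Real.sin b := by
    apply Real.sin_le_sin_of_le_of_le_pi_div_two (by linarith) hb hab
  have hca : 0 ≤ Real.cos a := Real.cos_nonneg_of_mem_Icc ⟨by linarith, by linarith⟩
  have hcb : Real.cos b ≤ Real.cos a := Real.cos_le_cos_of_nonneg_of_le_pi (le_of_lt ha) (by linarith) hab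
  exact div_le_div₀ hca hcb hsa hsab

lemma cot_nonneg {a : ℝ} (ha : 0 < a) (hb : a ≤ Real.pi/2) : 0 ≤ Real.cot a := by
  rw [Real.cot_eq_cos_div_sin]
  have hpi := Real.pi_pos
  exact div_nonneg (Real.cos_nonneg_of_mem_Icc ⟨by linarith, hb⟩)
    (le_of_lt (Real.sin_pos_of_pos_of_lt_pi ha (by linarith)))

lemma trig_bound {n m k : ℕ} (hn : 2 ≤ n) (hm : 0 < m) (hmn : m ≤ n) (hk : k < m)
    {s : ℝ} (hs : Real.cot (Real.pi / n) ≤ s) :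
    s * Real.cos (2*Real.pi*k/m) - Real.sin (2*Real.pi*k/m) ≤ s := by
  have hpi := Real.pi_pos
  have hn0 : (0:ℝ) < n := by positivity
  have hm0 : (0:ℝ) < m := by exact_mod_cast hm
  have hpn2 : Real.pi / n ≤ Real.pi / 2 := by
    apply div_le_div_of_nonneg_left (le_of_lt hpi) (by norm_num) (by exact_mod_cast hn)
  have hs0 : 0 ≤ s := le_trans (cot_nonneg (by positivity) hpn2) hs
  rcases Nat.eq_zero_or_pos k with rfl | hk1
  · simp
  -- k ≥ 1
  set φ : ℝ := Real.pi * k / m with hφ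
  have hθφ : 2*Real.pi*k/m = 2*φ := by rw [hφ]; ring
  have hφ0 : 0 < φ := by positivity
  have hφlt : φ ≤ Real.pi * (m-1) / m := by
    rw [hφ]
    have : (k:ℝ) ≤ (m:ℝ) - 1 := by
      have : (k:ℝ) + 1 ≤ m := by exact_mod_cast hk
      linarith
    gcongr
  have hφpi : φ < Real.pi := by
    have : Real.pi * (m-1)/m < Real.pi := by
      rw [div_lt_iff₀ hm0]; nlinarith
    linarith
  rw [hθφ, Real.cos_two_mul', Real.sin_two_mul]
  have hsinφ : 0 < Real.sin φ := Real.sin_pos_of_pos_of_lt_pi hφ0 hφpi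
  have key : 0 ≤ s * Real.sin φ + Real.cos φ := by
    rcases le_or_gt 0 (Real.cos φ) with hc | hc
    · positivity
    · -- φ > π/2; set ψ = π - φ
      set ψ : ℝ := Real.pi - φ with hψ
      have hψ0 : 0 < ψ := by simp [hψ]; linarith
      have hψ2 : ψ ≤ Real.pi / 2 := by
        by_contra h
        push_neg at h
        have : 0 ≤ Real.cos φ := Real.cos_nonneg_of_mem_Icc ⟨by linarith, by linarith⟩
        linarith
      have hψn : Real.pi / n ≤ ψ := by
        have h1 : Real.pi / m ≤ ψ := by
          have : ψ = Real.pi * (m - k) / m := by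
            rw [hψ, hφ]; field_simp
          rw [this]
          have hkm : (1:ℝ) ≤ (m:ℝ) - k := by
            have : (k:ℝ) + 1 ≤ m := by exact_mod_cast hk
            linarith
          have hkm1 : (0:ℝ) ≤ (m:ℝ) - k - 1 := by linarith
          rw [div_le_div_iff₀ hm0 hm0]
          nlinarith [mul_nonneg (mul_nonneg hpi.le hm0.le) hkm1]
        have h2 : Real.pi / n ≤ Real.pi / m :=
          div_le_div_of_nonneg_left (le_of_lt hpi) hm0 (by exact_mod_cast hmn)
        linarith
      have hcot : Real.cot ψ ≤ s := le_trans (cot_antitone (by positivity) hψn hψ2) hs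
      rw [Real.cot_eq_cos_div_sin] at hcot
      have hsψ : 0 < Real.sin ψ := Real.sin_pos_of_pos_of_lt_pi hψ0 (by linarith)
      have : Real.cos ψ ≤ s * Real.sin ψ := by
        rw [div_le_iff₀ hsψ] at hcot; linarith
      have e1 : Real.sin φ = Real.sin ψ := by rw [hψ]; rw [Real.sin_pi_sub]
      have e2 : Real.cos φ = - Real.cos ψ := by rw [hψ, Real.cos_pi_sub, neg_neg]
      rw [e1, e2]; linarith
  have hcos2 : Real.cos φ ^ 2 = 1 - Real.sin φ ^ 2 := by
    nlinarith [Real.sin_sq_add_cos_sq φ]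
  nlinarith [mul_nonneg hsinφ.le key, hcos2]
noncomputable def E (m t : ℕ) : ℂ := Complex.exp ((2*Real.pi*t/m : ℝ) * Complex.I)

lemma E_conj (m t : ℕ) : (starRingEnd ℂ) (E m t) = Complex.exp (-((2*Real.pi*t/m : ℝ) * Complex.I)) := by
  rw [E, ← Complex.exp_conj]
  congr 1
  simp [map_ofNat]

lemma E_mul_conj (m : ℕ) (a b : ℕ) :
    E m a * (starRingEnd ℂ) (E m b) = Complex.exp (((((a:ℤ) - b : ℤ) : ℂ) * (2*(Real.pi:ℂ)/m)) * Complex.I) := by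
  rw [E_conj, E, ← Complex.exp_add]
  congr 1
  push_cast
  ring

lemma orth (m : ℕ) (hm : 0 < m) (a b : ℕ) :
    ∑ k ∈ range m, E m (a*k) * (starRingEnd ℂ) (E m (b*k))
      = if a % m = b % m then (m:ℂ) else 0 := by
  have hm0 : (m:ℂ) ≠ 0 := by exact_mod_cast hm.ne'
  have hpi0 : ((Real.pi:ℂ)) ≠ 0 := by exact_mod_cast Real.pi_ne_zero
  set d : ℤ := (a:ℤ) - b with hd
  set ζ : ℂ := Complex.exp (((d:ℂ) * (2*(Real.pi:ℂ)/m)) * Complex.I) with hζ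
  have hterm : ∀ k : ℕ, E m (a*k) * (starRingEnd ℂ) (E m (b*k)) = ζ ^ k := by
    intro k
    rw [E_mul_conj m, hζ, ← Complex.exp_nat_mul]
    congr 1
    push_cast [hd]
    ring
  simp_rw [hterm]
  by_cases hdvd : a % m = b % m
  · have hdvd' : (m:ℤ) ∣ d := by
      have h2 := (Nat.modEq_iff_dvd (n := m)).mp hdvd
      rw [hd, ← neg_sub]
      exact dvd_neg.mpr h2
    obtain ⟨t, ht⟩ := hdvd'
    have hone : ζ = 1 := by
      rw [hζ]
      have harg : ((d:ℂ) * (2*(Real.pi:ℂ)/m)) * Complex.I = (t:ℂ) * (2 * (Real.pi:ℂ) * Complex.I) := by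
        have hdc : (d:ℂ) = (m:ℂ) * t := by exact_mod_cast congrArg (Int.cast : ℤ → ℂ) ht
        rw [hdc]
        field_simp
      rw [harg, Complex.exp_int_mul_two_pi_mul_I]
    simp [hone, hdvd]
  · have hζ1 : ζ ≠ 1 := by
      intro h
      obtain ⟨t, ht⟩ := Complex.exp_eq_one_iff.mp h
      apply hdvd
      have hc : (2*(Real.pi:ℂ)/(m:ℂ)) * Complex.I ≠ 0 :=
        mul_ne_zero (div_ne_zero (mul_ne_zero two_ne_zero hpi0) hm0) Complex.I_ne_zero
      have hdc : (d:ℂ) = (t:ℂ) * m := by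
        apply mul_right_cancel₀ hc
        rw [← mul_assoc, ht]
        field_simp
      have hdt : d = t * m := by exact_mod_cast hdc
      have : (m:ℤ) ∣ (b:ℤ) - a := ⟨-t, by linear_combination hd - hdt⟩
      exact (Nat.modEq_iff_dvd).mpr this
    rw [geom_sum_eq hζ1]
    have hζm : ζ ^ m = 1 := by
      rw [hζ, ← Complex.exp_nat_mul]
      have harg : (m:ℂ) * (((d:ℂ) * (2*(Real.pi:ℂ)/m)) * Complex.I) = (d:ℂ) * (2 * (Real.pi:ℂ) * Complex.I) := by
        field_simp
      rw [harg, Complex.exp_int_mul_two_pi_mul_I]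
    simp [hζm, hdvd]

lemma E_mul (m a b : ℕ) : E m a * E m b = E m (a+b) := by
  rw [E, E, E, ← Complex.exp_add]
  congr 1
  push_cast
  ring

lemma E_zero (m : ℕ) : E m 0 = 1 := by
  simp [E]

lemma identG (m : ℕ) (hm : 0 < m) (w : ℕ → ℂ) (r : ℕ) :
    ∑ k ∈ range m, ((starRingEnd ℂ) (∑ j ∈ range m, w j * (starRingEnd ℂ) (E m (j*k)))
        * (∑ j ∈ range m, w j * (starRingEnd ℂ) (E m (j*k)))) * E m (r*k)
      = m * ∑ j ∈ range m, (starRingEnd ℂ) (w j) * w ((j+r) % m) := by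
  have step1 : ∀ k, ((starRingEnd ℂ) (∑ j ∈ range m, w j * (starRingEnd ℂ) (E m (j*k)))
        * (∑ j ∈ range m, w j * (starRingEnd ℂ) (E m (j*k)))) * E m (r*k)
      = ∑ j ∈ range m, ∑ j' ∈ range m,
          ((starRingEnd ℂ) (w j) * w j') * (E m ((j+r)*k) * (starRingEnd ℂ) (E m (j'*k))) := by
    intro k
    rw [map_sum, sum_mul_sum, sum_mul]
    apply sum_congr rfl; intro j _
    rw [sum_mul]
    apply sum_congr rfl; intro j' _
    have h1 : E m (j*k) * E m (r*k) = E m ((j+r)*k) := by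
      rw [E_mul]; congr 1; ring
    rw [map_mul, Complex.conj_conj, ← h1]
    ring
  simp_rw [step1]
  rw [sum_comm]
  have step2 : ∀ j ∈ range m, (∑ k ∈ range m, ∑ j' ∈ range m,
          ((starRingEnd ℂ) (w j) * w j') * (E m ((j+r)*k) * (starRingEnd ℂ) (E m (j'*k))))
      = (starRingEnd ℂ) (w j) * w ((j+r) % m) * m := by
    intro j hj
    rw [sum_comm]
    have step3 : ∀ j' ∈ range m, (∑ k ∈ range m,
          ((starRingEnd ℂ) (w j) * w j') * (E m ((j+r)*k) * (starRingEnd ℂ) (E m (j'*k))))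
        = ((starRingEnd ℂ) (w j) * w j') * (if (j+r) % m = j' % m then (m:ℂ) else 0) := by
      intro j' _
      rw [← mul_sum, orth m hm (j+r) j']
    rw [sum_congr rfl step3]
    rw [Finset.sum_eq_single ((j+r) % m)]
    · simp
    · intro j' hj' hne
      have : j' % m = j' := Nat.mod_eq_of_lt (mem_range.mp hj')
      rw [this, if_neg (fun h => hne h.symm), mul_zero]
    · intro h
      exact absurd (mem_range.mpr (Nat.mod_lt _ hm)) h
  rw [sum_congr rfl step2, ← sum_mul]
  ring

lemma cycle_ineq (m : ℕ) (hm : 0 < m) (w : ℕ → ℂ) (hw : w m = w 0) {s : ℝ}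
    (htrig : ∀ k, k < m → s * Real.cos (2*Real.pi*k/m) - Real.sin (2*Real.pi*k/m) ≤ s) :
    s * (∑ j ∈ range m, (starRingEnd ℂ) (w j) * w (j+1)).re
      - (∑ j ∈ range m, (starRingEnd ℂ) (w j) * w (j+1)).im
      ≤ s * ∑ j ∈ range m, Complex.normSq (w j) := by
  set c : ℕ → ℂ := fun k => ∑ j ∈ range m, w j * (starRingEnd ℂ) (E m (j*k)) with hc
  set T : ℂ := ∑ j ∈ range m, (starRingEnd ℂ) (w j) * w (j+1) with hT
  set N : ℝ := ∑ j ∈ range m, Complex.normSq (w j) with hN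
  have hmod : ∀ j ∈ range m, (starRingEnd ℂ) (w j) * w ((j+1) % m)
      = (starRingEnd ℂ) (w j) * w (j+1) := by
    intro j hj
    rcases eq_or_lt_of_le (Nat.succ_le_of_lt (mem_range.mp hj)) with h | h
    · have h1 : (j+1) % m = 0 := by rw [show j+1 = m from h]; exact Nat.mod_self _
      rw [h1, show j+1 = m from h, hw]
    · rw [Nat.mod_eq_of_lt h]
  have idA : ∑ k ∈ range m, ((Complex.normSq (c k) : ℝ) : ℂ) * E m (1*k) = (m:ℝ) * T := by
    have := identG m hm w 1
    simp_rw [Complex.normSq_eq_conj_mul_self]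
    rw [hc, this, sum_congr rfl hmod, hT]
    norm_cast
  have idB : ∑ k ∈ range m, ((Complex.normSq (c k) : ℝ) : ℂ) * E m (0*k) = (m:ℝ) * (N:ℂ) := by
    have := identG m hm w 0
    simp_rw [Complex.normSq_eq_conj_mul_self]
    rw [hc, this]
    have : ∀ j ∈ range m, (starRingEnd ℂ) (w j) * w ((j+0) % m)
        = ((Complex.normSq (w j) : ℝ) : ℂ) := by
      intro j hj
      rw [Nat.add_zero, Nat.mod_eq_of_lt (mem_range.mp hj), ← Complex.normSq_eq_conj_mul_self]
    rw [sum_congr rfl this, hN]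
    push_cast
    ring
  have hre : ∀ k : ℕ, (((Complex.normSq (c k) : ℝ) : ℂ) * E m k).re
      = Complex.normSq (c k) * Real.cos (2*Real.pi*k/m) := by
    intro k
    rw [E, Complex.mul_re, Complex.exp_ofReal_mul_I_re, Complex.exp_ofReal_mul_I_im]
    simp
  have him : ∀ k : ℕ, (((Complex.normSq (c k) : ℝ) : ℂ) * E m k).im
      = Complex.normSq (c k) * Real.sin (2*Real.pi*k/m) := by
    intro k
    rw [E, Complex.mul_im, Complex.exp_ofReal_mul_I_re, Complex.exp_ofReal_mul_I_im]
    simp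
  simp_rw [one_mul] at idA
  simp_rw [zero_mul] at idB
  have reA : ∑ k ∈ range m, Complex.normSq (c k) * Real.cos (2*Real.pi*k/m) = m * T.re := by
    have h := congrArg Complex.re idA
    rw [Complex.re_sum] at h
    simp only [hre] at h
    rw [h]
    simp [Complex.mul_re]
  have imA : ∑ k ∈ range m, Complex.normSq (c k) * Real.sin (2*Real.pi*k/m) = m * T.im := by
    have h := congrArg Complex.im idA
    rw [Complex.im_sum] at h
    simp only [him] at h
    rw [h]
    simp [Complex.mul_im]
  have reB : ∑ k ∈ range m, Complex.normSq (c k) = m * N := by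
    have h := congrArg Complex.re idB
    rw [Complex.re_sum] at h
    simp only [E_zero, mul_one] at h
    simp only [← Complex.ofReal_mul, ← Complex.ofReal_natCast, Complex.ofReal_re] at h
    simpa using h
  have hsum : 0 ≤ ∑ k ∈ range m, Complex.normSq (c k)
      * (s - (s * Real.cos (2*Real.pi*k/m) - Real.sin (2*Real.pi*k/m))) := by
    apply Finset.sum_nonneg
    intro k hk
    apply mul_nonneg (Complex.normSq_nonneg _)
    have := htrig k (mem_range.mp hk)
    linarith
  have expand : ∑ k ∈ range m, Complex.normSq (c k)
      * (s - (s * Real.cos (2*Real.pi*k/m) - Real.sin (2*Real.pi*k/m)))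
      = s * (m * N) - s * (m * T.re) + m * T.im := by
    rw [← reB, ← reA, ← imA, Finset.mul_sum, Finset.mul_sum]
    rw [← Finset.sum_sub_distrib, ← Finset.sum_add_distrib]
    apply sum_congr rfl
    intro k _
    ring
  have hmR : (0:ℝ) < m := by exact_mod_cast hm
  have h2 : 0 ≤ (m:ℝ) * (s * N - s * T.re + T.im) := by
    rw [expand] at hsum
    nlinarith [hsum]
  have h3 : 0 ≤ s * N - s * T.re + T.im := by
    by_contra hX
    push_neg at hX
    have := mul_neg_of_pos_of_neg hmR hX
    linarith
  linarith

section
variable {n : ℕ} (e : Equiv.Perm (Fin n))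

noncomputable def mP (i : Fin n) : ℕ := Function.minimalPeriod ⇑e i

noncomputable def O (i : Fin n) : Finset (Fin n) :=
  Finset.univ.filter (fun j => e.SameCycle i j)

lemma isPeriodic (i : Fin n) : Function.IsPeriodicPt ⇑e (orderOf e) i := by
  show (⇑e)^[orderOf e] i = i
  rw [Equiv.Perm.iterate_eq_pow, pow_orderOf_eq_one]
  rfl

lemma mP_pos (i : Fin n) : 0 < mP e i :=
  Function.IsPeriodicPt.minimalPeriod_pos (orderOf_pos e) (isPeriodic e i)

lemma mP_fix (i : Fin n) : (⇑e)^[mP e i] i = i := Function.iterate_minimalPeriod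

lemma O_eq (i : Fin n) : O e i = (range (mP e i)).image (fun k => (⇑e)^[k] i) := by
  ext j
  simp only [O, mem_filter, mem_univ, true_and, mem_image, mem_range]
  constructor
  · intro hsc
    obtain ⟨k, _, hkj⟩ := Equiv.Perm.SameCycle.exists_pow_eq' hsc
    exact ⟨k % mP e i, Nat.mod_lt _ (mP_pos e i), by
      simp only [mP]
      rw [Function.iterate_mod_minimalPeriod_eq]
      simpa [Equiv.Perm.iterate_eq_pow] using hkj⟩
  · rintro ⟨k, _, rfl⟩
    simp only [Equiv.Perm.iterate_eq_pow]
    exact (Equiv.Perm.sameCycle_pow_right).mpr (Equiv.Perm.SameCycle.refl e i)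

lemma O_inj (i : Fin n) : Set.InjOn (fun k => (⇑e)^[k] i) ↑(range (mP e i)) := by
  rw [Finset.coe_range]
  exact Function.iterate_injOn_Iio_minimalPeriod

lemma O_card (i : Fin n) : (O e i).card = mP e i := by
  rw [O_eq, Finset.card_image_of_injOn (O_inj e i), Finset.card_range]

lemma O_congr {i j : Fin n} (h : e.SameCycle i j) : O e i = O e j := by
  ext k
  simp only [O, mem_filter, mem_univ, true_and]
  exact ⟨fun hik => h.symm.trans hik, fun hjk => h.trans hjk⟩

lemma mP_congr {i j : Fin n} (h : e.SameCycle i j) : mP e i = mP e j := by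
  rw [← O_card, ← O_card, O_congr e h]

lemma mP_le (i : Fin n) : mP e i ≤ n := by
  rw [← O_card]
  simpa using Finset.card_le_univ (O e i)

lemma double_count (h : Fin n → ℝ) :
    ∑ j, h j = ∑ i, (∑ j ∈ O e i, h j) / (mP e i : ℝ) := by
  have step : ∀ i : Fin n, (∑ j ∈ O e i, h j) / (mP e i : ℝ)
      = ∑ j, if e.SameCycle i j then h j / (mP e i : ℝ) else 0 := by
    intro i
    rw [Finset.sum_div, O, Finset.sum_filter]
  simp_rw [step]
  rw [Finset.sum_comm]
  apply sum_congr rfl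
  intro j _
  have step2 : ∀ i : Fin n, (if e.SameCycle i j then h j / (mP e i : ℝ) else 0)
      = (if e.SameCycle i j then h j / (mP e j : ℝ) else 0) := by
    intro i
    split_ifs with hsc
    · rw [mP_congr e hsc]
    · rfl
  simp_rw [step2]
  have hfil : Finset.univ.filter (fun i => e.SameCycle i j) = O e j := by
    ext k
    simp only [O, mem_filter, mem_univ, true_and]
    exact ⟨Equiv.Perm.SameCycle.symm, Equiv.Perm.SameCycle.symm⟩
  rw [← Finset.sum_filter, hfil, Finset.sum_const, O_card, nsmul_eq_mul]
  have hm0 : ((mP e j : ℝ)) ≠ 0 := by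
    have := mP_pos e j
    positivity
  field_simp
end

lemma key (n : ℕ) (hn : 2 ≤ n) (e : Equiv.Perm (Fin n)) {s : ℝ}
    (hs : Real.cot (Real.pi / (n:ℝ)) ≤ s) (z : Fin n → ℂ) :
    s * (∑ i, (starRingEnd ℂ) (z i) * z (e i)).re
      - (∑ i, (starRingEnd ℂ) (z i) * z (e i)).im
      ≤ s * ∑ i, Complex.normSq (z i) := by
  set h : Fin n → ℝ := fun j => s * Complex.normSq (z j)
    - (s * ((starRingEnd ℂ) (z j) * z (e j)).re - ((starRingEnd ℂ) (z j) * z (e j)).im)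
    with hh
  have hsum : 0 ≤ ∑ j, h j := by
    rw [double_count e h]
    apply sum_nonneg
    intro i _
    apply div_nonneg ?_ (Nat.cast_nonneg _)
    rw [O_eq e i, Finset.sum_image
      (fun x hx y hy hxy => O_inj e i (by simpa using hx) (by simpa using hy) hxy)]
    set m := mP e i with hm
    set w : ℕ → ℂ := fun k => z ((⇑e)^[k] i) with hwdef
    have hw : w m = w 0 := by
      simp only [hwdef, Function.iterate_zero_apply]
      rw [hm, mP_fix]
    have htrig : ∀ k, k < m → s * Real.cos (2*Real.pi*k/m) - Real.sin (2*Real.pi*k/m) ≤ s :=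
      fun k hk => trig_bound hn (mP_pos e i) (mP_le e i) hk hs
    have hci := cycle_ineq m (mP_pos e i) w hw htrig
    have hterm : ∀ k, h ((⇑e)^[k] i)
        = s * Complex.normSq (w k)
          - (s * ((starRingEnd ℂ) (w k) * w (k+1)).re
              - ((starRingEnd ℂ) (w k) * w (k+1)).im) := by
      intro k
      rw [hh]
      simp only [hwdef]
      rw [Function.iterate_succ_apply']
    simp_rw [hterm]
    have expand : ∑ k ∈ range m, (s * Complex.normSq (w k)
          - (s * ((starRingEnd ℂ) (w k) * w (k+1)).re
              - ((starRingEnd ℂ) (w k) * w (k+1)).im))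
        = s * (∑ k ∈ range m, Complex.normSq (w k))
          - (s * (∑ k ∈ range m, (starRingEnd ℂ) (w k) * w (k+1)).re
              - (∑ k ∈ range m, (starRingEnd ℂ) (w k) * w (k+1)).im) := by
      rw [Complex.re_sum, Complex.im_sum, Finset.mul_sum, Finset.mul_sum,
        ← Finset.sum_sub_distrib, ← Finset.sum_sub_distrib]
    rw [expand]
    linarith
  have expand2 : ∑ j, h j
      = s * (∑ i, Complex.normSq (z i))
        - (s * (∑ i, (starRingEnd ℂ) (z i) * z (e i)).re
            - (∑ i, (starRingEnd ℂ) (z i) * z (e i)).im) := by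
    rw [hh, Complex.re_sum, Complex.im_sum, Finset.mul_sum, Finset.mul_sum,
      ← Finset.sum_sub_distrib, ← Finset.sum_sub_distrib]
  rw [expand2] at hsum
  linarith

open Matrix ComplexOrder

/-- For `n ≥ 2` and a permutation matrix `P` of size `n`, the matrix `I − P` is
positive semi-definite on `ℝⁿ`, and for every `s ≥ cot(π/n)` the Hermitian matrix
`s (2I − P − Pᵀ) + i (Pᵀ − P)` is positive semi-definite on `ℂⁿ`; i.e. the asymmetry
index of `I − P` is at most `cot(π/n)`. -/
theorem perm_matrix_asymmetry_index (n : ℕ) (hn : 2 ≤ n) (e : Equiv.Perm (Fin n)) :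
    (∀ x : Fin n → ℝ,
      0 ≤ x ⬝ᵥ ((1 : Matrix (Fin n) (Fin n) ℝ) - e.permMatrix ℝ) *ᵥ x) ∧
    (∀ s : ℝ, Real.cot (Real.pi / n) ≤ s → ∀ z : Fin n → ℂ,
      0 ≤ star z ⬝ᵥ
        ((s : ℂ) • (((2 : ℝ) • (1 : Matrix (Fin n) (Fin n) ℝ) - e.permMatrix ℝ
            - (e.permMatrix ℝ)ᵀ).map Complex.ofReal)
          + Complex.I • (((e.permMatrix ℝ)ᵀ - e.permMatrix ℝ).map Complex.ofReal)) *ᵥ z) := by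
  have hP : ∀ i j : Fin n, e.permMatrix ℝ i j = if e i = j then 1 else 0 := by
    intro i j
    simp [Equiv.Perm.permMatrix, PEquiv.toMatrix_apply, Equiv.toPEquiv_apply,
      Option.mem_def, eq_comm]
  constructor
  · intro x
    have hmv : ∀ i, (((1 : Matrix (Fin n) (Fin n) ℝ) - e.permMatrix ℝ) *ᵥ x) i
        = x i - x (e i) := by
      intro i
      simp [Matrix.mulVec, dotProduct, Matrix.sub_apply, Matrix.one_apply, hP,
        sub_mul, Finset.sum_sub_distrib, ite_mul, Finset.sum_ite_eq, Equiv.toPEquiv_apply,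
        Option.some.injEq]
    have h1 : x ⬝ᵥ (((1 : Matrix (Fin n) (Fin n) ℝ) - e.permMatrix ℝ) *ᵥ x)
        = ∑ i, (x i * x i - x i * x (e i)) := by
      simp only [dotProduct]
      apply Finset.sum_congr rfl
      intro i _
      rw [hmv i]
      ring
    rw [h1]
    have h2 : 2 * ∑ i, x i * x (e i) ≤ (∑ i, x i * x i) + ∑ i, x (e i) * x (e i) := by
      rw [Finset.mul_sum, ← Finset.sum_add_distrib]
      apply Finset.sum_le_sum
      intro i _
      nlinarith [sq_nonneg (x i - x (e i))]
    have h3 : ∑ i, x (e i) * x (e i) = ∑ i, x i * x i :=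
      Equiv.sum_comp e (fun i => x i * x i)
    rw [Finset.sum_sub_distrib]
    linarith
  · intro s hs z
    set S : ℂ := ∑ i, (starRingEnd ℂ) (z i) * z (e i) with hS
    set N : ℝ := ∑ i, Complex.normSq (z i) with hN
    set A : Matrix (Fin n) (Fin n) ℂ :=
      (s : ℂ) • (((2 : ℝ) • (1 : Matrix (Fin n) (Fin n) ℝ) - e.permMatrix ℝ
            - (e.permMatrix ℝ)ᵀ).map Complex.ofReal)
          + Complex.I • (((e.permMatrix ℝ)ᵀ - e.permMatrix ℝ).map Complex.ofReal) with hA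
    have hAv : ∀ i, (A *ᵥ z) i
        = (s:ℂ) * (2 * z i - z (e i) - z (e.symm i))
          + Complex.I * (z (e.symm i) - z (e i)) := by
      intro i
      have hP' : ∀ j : Fin n, (e.permMatrix ℝ)ᵀ i j = if j = e.symm i then 1 else 0 := by
        intro j
        have hiff : (e j = i) ↔ (j = e.symm i) := by
          constructor
          · rintro rfl; simp
          · rintro rfl; simp
        rw [Matrix.transpose_apply, hP]
        exact if_congr hiff rfl rfl
      simp only [hA, Matrix.mulVec, dotProduct, Matrix.add_apply, Matrix.smul_apply,
        Matrix.map_apply, Matrix.sub_apply, Matrix.one_apply, hP, hP',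
        smul_eq_mul, Pi.smul_apply]
      push_cast [apply_ite Complex.ofReal]
      simp only [add_mul, sub_mul, mul_assoc, ite_mul, one_mul, zero_mul, mul_ite, mul_zero,
        Finset.sum_add_distrib, Finset.sum_sub_distrib, Finset.sum_ite_eq, Finset.sum_ite_eq',
        Finset.mem_univ, if_true, ← Finset.mul_sum]
    have hdot : star z ⬝ᵥ (A *ᵥ z)
        = (s:ℂ) * (2 * (N:ℂ) - S - (starRingEnd ℂ) S) + Complex.I * ((starRingEnd ℂ) S - S) := by
      have hS' : ∑ i, (starRingEnd ℂ) (z i) * z (e.symm i) = (starRingEnd ℂ) S := by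
        have h4 : ∑ i, (starRingEnd ℂ) (z i) * z (e.symm i)
            = ∑ k, (starRingEnd ℂ) (z (e k)) * z k := by
          rw [← Equiv.sum_comp e (fun i => (starRingEnd ℂ) (z i) * z (e.symm i))]
          simp
        rw [h4, hS, map_sum]
        apply Finset.sum_congr rfl
        intro i _
        rw [_root_.map_mul, Complex.conj_conj]
        ring
      have hNc : ∑ i, (starRingEnd ℂ) (z i) * z i = (N:ℂ) := by
        rw [hN]
        push_cast
        apply Finset.sum_congr rfl
        intro i _
        rw [← Complex.normSq_eq_conj_mul_self]
      calc star z ⬝ᵥ (A *ᵥ z)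
          = ∑ i, (starRingEnd ℂ) (z i) * ((A *ᵥ z) i) := by
            simp [dotProduct, Pi.star_apply, Complex.star_def]
        _ = (s:ℂ) * (2 * (∑ i, (starRingEnd ℂ) (z i) * z i)
              - (∑ i, (starRingEnd ℂ) (z i) * z (e i))
              - (∑ i, (starRingEnd ℂ) (z i) * z (e.symm i)))
            + Complex.I * ((∑ i, (starRingEnd ℂ) (z i) * z (e.symm i))
              - (∑ i, (starRingEnd ℂ) (z i) * z (e i))) := by
            simp only [Finset.mul_sum, ← Finset.sum_sub_distrib, ← Finset.sum_add_distrib]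
            apply Finset.sum_congr rfl
            intro i _
            rw [hAv i]
            ring
        _ = _ := by rw [hS', hNc, hS]
    have hreal : star z ⬝ᵥ (A *ᵥ z) = ((2*s*(N - S.re) + 2*S.im : ℝ) : ℂ) := by
      rw [hdot]
      have h1 : S + (starRingEnd ℂ) S = ((2 * S.re : ℝ) : ℂ) := Complex.add_conj S
      have h2 : S - (starRingEnd ℂ) S = ((2 * S.im : ℝ) : ℂ) * Complex.I := Complex.sub_conj S
      have hI := Complex.I_sq
      push_cast at h1 h2 ⊢
      linear_combination (-(s:ℂ)) * h1 - Complex.I * h2 - 2 * (S.im:ℂ) * hI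
    rw [hreal, Complex.zero_le_real]
    have hk := key n hn e hs z
    rw [← hS, ← hN] at hk
    linarith
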